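/- arXiv:1812.06033 — 2 statements merged into one kernel-verified Lean document; each statement's English description precedes it below -/
import Mathlib

section
/- For every prime power q and all partitions λ, μ, ν, the Hall numbers satisfy g^λ_{μ,ν} = g^λ_{ν,μ}; that is, the number of k[X]-submodules N ⊆ I_λ with N ≅ I_ν and I_λ/N ≅ I_μ equals the number of k[X]-submodules M ⊆ I_λ with M ≅ I_μ and I_λ/M ≅ I_ν. -/
open scoped BigOperators

/-- A partition: a weakly decreasing, finitely supported sequence of
nonnegative integers, indexed from `0` (so `parts 0` is `λ₁`). -/
structure Ptn where
  parts : ℕ → ℕ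
  antitone' : Antitone parts
  exists_zero : ∃ N, parts N = 0

namespace Ptn

/-- `|λ| = Σᵢ λᵢ`. -/
noncomputable def size (l : Ptn) : ℕ := ∑ᶠ j, l.parts j

/-- `ℓ(λ)`, the number of nonzero parts. -/
noncomputable def len (l : Ptn) : ℕ := Set.ncard {j | l.parts j ≠ 0}

/-- `n(λ) = Σᵢ (i-1) λᵢ` (with 1-based `i`). -/
noncomputable def nstat (l : Ptn) : ℕ := ∑ᶠ j, j * l.parts j

/-- `λ'ᵢ = #{j : λⱼ ≥ i}`, the transpose partition (meaningful for `i ≥ 1`). -/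
noncomputable def conj (l : Ptn) (i : ℕ) : ℕ := Set.ncard {j | i ≤ l.parts j}

/-- `mᵢ(λ) = #{j : λⱼ = i}` (meaningful for `i ≥ 1`). -/
noncomputable def mult (l : Ptn) (i : ℕ) : ℕ := Set.ncard {j | l.parts j = i}

/-- The partition `(1^n)`. -/
def onePow (n : ℕ) : Ptn where
  parts := fun j => if j < n then 1 else 0
  antitone' := by
    intro a b hab
    simp only
    split_ifs <;> omega
  exists_zero := ⟨n, by simp⟩

/-- The one-row partition `(n)`. -/
def single (n : ℕ) : Ptn where
  parts := fun j => if j = 0 then n else 0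
  antitone' := by
    intro a b hab
    simp only
    split_ifs <;> omega
  exists_zero := ⟨n + 1, by simp⟩

/-- The empty partition. -/
def empty : Ptn := onePow 0

end Ptn

/-- The q-Pochhammer symbol `(x;t)_n = ∏_{i=1}^n (1 - x t^{i-1})`. -/
def qPoch {K : Type*} [CommRing K] (x t : K) (n : ℕ) : K :=
  ∏ i ∈ Finset.range n, (1 - x * t ^ i)

/-- The Gaussian binomial coefficient `[n choose r]_t`, zero for `r > n`. -/
noncomputable def qBinom {K : Type*} [Field K] (t : K) (n r : ℕ) : K :=
  if r ≤ n then qPoch t t n / (qPoch t t r * qPoch t t (n - r)) else 0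

/-- The Gaussian binomial coefficient with integer arguments,
zero outside `0 ≤ r ≤ n`. -/
noncomputable def qBinomZ {K : Type*} [Field K] (t : K) (n r : ℤ) : K :=
  if 0 ≤ r ∧ r ≤ n then
    qPoch t t n.toNat / (qPoch t t r.toNat * qPoch t t (n - r).toNat)
  else 0

/-- `I_λ = ⊕ᵢ k[X]/(X^{λᵢ})`, a module over `k[X]` on which `X` acts nilpotently. -/
def Imod (k : Type*) [Field k] (l : Ptn) : Type _ :=
  ∀ i : Fin l.len, Polynomial k ⧸ Ideal.span {(Polynomial.X : Polynomial k) ^ l.parts (i : ℕ)}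

noncomputable instance (k : Type*) [Field k] (l : Ptn) : AddCommGroup (Imod k l) :=
  inferInstanceAs (AddCommGroup
    (∀ i : Fin l.len, Polynomial k ⧸ Ideal.span {(Polynomial.X : Polynomial k) ^ l.parts (i : ℕ)}))

noncomputable instance (k : Type*) [Field k] (l : Ptn) : Module (Polynomial k) (Imod k l) :=
  inferInstanceAs (Module (Polynomial k)
    (∀ i : Fin l.len, Polynomial k ⧸ Ideal.span {(Polynomial.X : Polynomial k) ^ l.parts (i : ℕ)}))

/-- The Hall number `g^λ_{μ,ν}`: the number of `k[X]`-submodules `N ⊆ I_λ` with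
`N ≅ I_ν` and `I_λ/N ≅ I_μ`. -/
noncomputable def hallNum (k : Type*) [Field k] (l m n : Ptn) : ℕ :=
  Nat.card {N : Submodule (Polynomial k) (Imod k l) //
    Nonempty ((↥N) ≃ₗ[Polynomial k] Imod k n) ∧
    Nonempty ((Imod k l ⧸ N) ≃ₗ[Polynomial k] Imod k m)}

/-- `a_λ`, the number of `k[X]`-module automorphisms of `I_λ`. -/
noncomputable def aut (k : Type*) [Field k] (l : Ptn) : ℕ :=
  Nat.card (Imod k l ≃ₗ[Polynomial k] Imod k l)

set_option maxHeartbeats 1600000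

/-! ### Duality machinery -/

section DualModule
variable {k : Type*} [Field k] {M : Type*} [AddCommGroup M] [Module k M]
  [Module (Polynomial k) M] [IsScalarTower k (Polynomial k) M]

noncomputable instance dualPolySMul : SMul (Polynomial k) (Module.Dual k M) :=
  ⟨fun p φ => φ.comp ((LinearMap.lsmul (Polynomial k) M p).restrictScalars k)⟩

theorem dual_poly_smul_apply (p : Polynomial k) (φ : Module.Dual k M) (m : M) :
    (p • φ) m = φ (p • m) := rfl

noncomputable instance dualPolyModule : Module (Polynomial k) (Module.Dual k M) where
  one_smul φ := by ext m; simp [dual_poly_smul_apply]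
  mul_smul p q φ := by ext m; simp [dual_poly_smul_apply, mul_smul, mul_comm p q]
  smul_zero p := by ext m; simp [dual_poly_smul_apply]
  smul_add p φ ψ := by ext m; simp [dual_poly_smul_apply]
  add_smul p q φ := by ext m; simp [dual_poly_smul_apply, add_smul]
  zero_smul φ := by ext m; simp [dual_poly_smul_apply]

instance dualPolyTower : IsScalarTower k (Polynomial k) (Module.Dual k M) :=
  ⟨fun c p φ => by ext m; simp [dual_poly_smul_apply, smul_smul]⟩

variable (N : Submodule (Polynomial k) M)

/-- The annihilator of a `k[X]`-submodule, as a `k[X]`-submodule of the `k`-dual. -/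
def polyAnn : Submodule (Polynomial k) (Module.Dual k M) where
  carrier := {φ | ∀ v ∈ N, φ v = 0}
  add_mem' {φ ψ} hφ hψ v hv := by simp [hφ v hv, hψ v hv]
  zero_mem' := by simp
  smul_mem' p φ hφ v hv := by
    rw [dual_poly_smul_apply]; exact hφ _ (N.smul_mem p hv)

theorem mem_polyAnn (φ : Module.Dual k M) : φ ∈ polyAnn N ↔ ∀ v ∈ N, φ v = 0 := Iff.rfl

/-- The natural map `Dual (M/N) → polyAnn N`. -/
noncomputable def polyAnnHom : Module.Dual k (M ⧸ N) →ₗ[Polynomial k] ↥(polyAnn N) where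
  toFun φ := ⟨φ.comp (N.mkQ.restrictScalars k), fun v hv => by
    simp [(Submodule.Quotient.mk_eq_zero N).2 hv]⟩
  map_add' φ ψ := Subtype.ext rfl
  map_smul' p φ := by
    refine Subtype.ext ?_
    rw [RingHom.id_apply, SetLike.val_smul]
    ext m
    show (p • φ) (Submodule.Quotient.mk m) = (p • (φ.comp (N.mkQ.restrictScalars k))) m
    rw [dual_poly_smul_apply, dual_poly_smul_apply]
    simp only [LinearMap.comp_apply, LinearMap.restrictScalars_apply, Submodule.mkQ_apply,
      Submodule.Quotient.mk_smul]

/-- `Dual (M/N) ≃ polyAnn N` as `k[X]`-modules. -/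
noncomputable def polyAnnEquiv : Module.Dual k (M ⧸ N) ≃ₗ[Polynomial k] ↥(polyAnn N) := by
  refine LinearEquiv.ofBijective (polyAnnHom N) ⟨?_, ?_⟩
  · intro φ ψ h
    ext x
    obtain ⟨m, rfl⟩ := Submodule.Quotient.mk_surjective N x
    simpa [polyAnnHom] using LinearMap.congr_fun (congrArg Subtype.val h) m
  · rintro ⟨ψ, hψ⟩
    have hker : N.restrictScalars k ≤ LinearMap.ker ψ := fun v hv => hψ v hv
    refine ⟨(Submodule.liftQ (N.restrictScalars k) ψ hker).comp
      ((Submodule.Quotient.restrictScalarsEquiv k N).symm :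
        (M ⧸ N) →ₗ[k] (M ⧸ N.restrictScalars k)), ?_⟩
    apply Subtype.ext
    ext v
    show Submodule.liftQ (N.restrictScalars k) ψ hker
      ((Submodule.Quotient.restrictScalarsEquiv k N).symm (Submodule.Quotient.mk v)) = ψ v
    rw [show ((Submodule.Quotient.restrictScalarsEquiv k N).symm (Submodule.Quotient.mk v) :
        M ⧸ N.restrictScalars k) = Submodule.Quotient.mk v from rfl]
    simp

/-- The restriction map `Dual M → Dual N`. -/
noncomputable def polyDualRestrict : Module.Dual k M →ₗ[Polynomial k] Module.Dual k ↥N where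
  toFun φ := φ.comp (N.subtype.restrictScalars k)
  map_add' φ ψ := rfl
  map_smul' p φ := by
    ext m
    show (p • φ) ((m : M)) = (p • (φ.comp (N.subtype.restrictScalars k))) m
    rw [dual_poly_smul_apply, dual_poly_smul_apply]
    rfl

theorem polyAnn_le_ker : polyAnn N ≤ LinearMap.ker (polyDualRestrict N) := by
  intro φ hφ
  rw [LinearMap.mem_ker]
  ext m
  exact hφ m m.2

/-- `Dual M ⧸ polyAnn N ≃ Dual N` as `k[X]`-modules. -/
noncomputable def polyQuotAnnEquiv :
    (Module.Dual k M ⧸ polyAnn N) ≃ₗ[Polynomial k] Module.Dual k ↥N := by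
  refine LinearEquiv.ofBijective
    (Submodule.liftQ (polyAnn N) (polyDualRestrict N) (polyAnn_le_ker N)) ⟨?_, ?_⟩
  · intro x y h
    obtain ⟨φ, rfl⟩ := Submodule.Quotient.mk_surjective _ x
    obtain ⟨ψ, rfl⟩ := Submodule.Quotient.mk_surjective _ y
    rw [Submodule.liftQ_apply, Submodule.liftQ_apply] at h
    rw [Submodule.Quotient.eq]
    intro v hv
    have := LinearMap.congr_fun h ⟨v, hv⟩
    simpa [polyDualRestrict, sub_eq_zero] using this
  · intro f
    obtain ⟨φ, hφ⟩ := Subspace.dualRestrict_surjective (W := N.restrictScalars k)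
      (f.comp (((Submodule.restrictScalarsEquiv k (Polynomial k) M N).restrictScalars k) :
        ↥(N.restrictScalars k) →ₗ[k] ↥N))
    refine ⟨Submodule.Quotient.mk φ, ?_⟩
    rw [Submodule.liftQ_apply]
    ext m
    have := LinearMap.congr_fun hφ ⟨(m : M), m.2⟩
    have h2 : φ (m : M) = f ((Submodule.restrictScalarsEquiv k (Polynomial k) M N) ⟨↑m, m.2⟩) := by
      simpa [Submodule.dualRestrict_apply, polyDualRestrict] using this
    exact h2

theorem polyAnn_coe : (polyAnn N : Set (Module.Dual k M)) =
    ((N.restrictScalars k).dualAnnihilator : Set (Module.Dual k M)) := by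
  ext φ
  simp only [SetLike.mem_coe, mem_polyAnn, Submodule.mem_dualAnnihilator,
    Submodule.restrictScalars_mem]

theorem polyAnn_inj [FiniteDimensional k M] {N N' : Submodule (Polynomial k) M}
    (h : polyAnn N = polyAnn N') : N = N' := by
  have h2 : (N.restrictScalars k).dualAnnihilator = (N'.restrictScalars k).dualAnnihilator := by
    apply SetLike.ext'
    rw [← polyAnn_coe, ← polyAnn_coe, h]
  have h3 := congrArg Submodule.dualCoannihilator h2
  rw [Subspace.dualAnnihilator_dualCoannihilator_eq,
    Subspace.dualAnnihilator_dualCoannihilator_eq] at h3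
  exact Submodule.restrictScalars_injective k _ _ h3

/-- Dual of a `k[X]`-linear equiv. -/
noncomputable def polyDualCongr {A B : Type*}
    [AddCommGroup A] [Module k A] [Module (Polynomial k) A] [IsScalarTower k (Polynomial k) A]
    [AddCommGroup B] [Module k B] [Module (Polynomial k) B] [IsScalarTower k (Polynomial k) B]
    (e : A ≃ₗ[Polynomial k] B) : Module.Dual k B ≃ₗ[Polynomial k] Module.Dual k A :=
  LinearEquiv.ofLinear
    { toFun := fun φ => φ.comp ((e : A →ₗ[Polynomial k] B).restrictScalars k)
      map_add' := fun _ _ => rfl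
      map_smul' := fun p φ => by
        ext a
        show (p • φ) (e a) = (p • (φ.comp ((e : A →ₗ[Polynomial k] B).restrictScalars k))) a
        rw [dual_poly_smul_apply, dual_poly_smul_apply]
        simp }
    { toFun := fun ψ => ψ.comp (((e.symm : B ≃ₗ[Polynomial k] A) : B →ₗ[Polynomial k] A).restrictScalars k)
      map_add' := fun _ _ => rfl
      map_smul' := fun p ψ => by
        ext b
        show (p • ψ) (e.symm b) = (p • (ψ.comp (((e.symm : B ≃ₗ[Polynomial k] A) : B →ₗ[Polynomial k] A).restrictScalars k))) b
        rw [dual_poly_smul_apply, dual_poly_smul_apply]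
        simp }
    (by ext φ a; simp) (by ext ψ b; simp)

end DualModule

/-! ### Self-duality of `k[X]/(X^a)` -/

section Component
variable (k : Type*) [Field k] (a : ℕ)

open Polynomial

/-- `k[X]/(X^a)`. -/
abbrev Qmod := Polynomial k ⧸ Ideal.span {(Polynomial.X : Polynomial k) ^ a}

/-- The `coeff (a-1)` functional on `k[X]/(X^a)`. -/
noncomputable def coeffFn (ha : 0 < a) : Module.Dual k (Qmod k a) :=
  (Submodule.liftQ ((Ideal.span {(X : Polynomial k) ^ a}).restrictScalars k)
    (Polynomial.lcoeff k (a - 1))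
    (by
      intro p hp
      rw [Submodule.restrictScalars_mem, Ideal.mem_span_singleton] at hp
      rw [LinearMap.mem_ker, lcoeff_apply]
      rw [X_pow_dvd_iff] at hp
      exact hp _ (by omega))).comp
  (((Submodule.Quotient.restrictScalarsEquiv k
      ((Ideal.span {(X : Polynomial k) ^ a}) : Submodule (Polynomial k) (Polynomial k))).symm) :
    Qmod k a →ₗ[k] _)

theorem coeffFn_mk (ha : 0 < a) (r : Polynomial k) :
    coeffFn k a ha (Ideal.Quotient.mk _ r) = r.coeff (a - 1) := by
  simp [coeffFn]
  rfl

theorem qmod_span_top : Submodule.span k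
    ((fun i => (Ideal.Quotient.mk _ ((X : Polynomial k) ^ i) : Qmod k a)) '' (Set.Iio a)) = ⊤ := by
  rw [Submodule.eq_top_iff']
  intro w
  obtain ⟨r, rfl⟩ := Ideal.Quotient.mk_surjective w
  induction r using Polynomial.induction_on' with
  | add p q hp hq => rw [map_add]; exact Submodule.add_mem _ hp hq
  | monomial n c =>
    rcases lt_or_ge n a with h | h
    · have : (Ideal.Quotient.mk _ ((monomial n) c) : Qmod k a) =
          c • Ideal.Quotient.mk _ ((X : Polynomial k)^n) := by
        have h2 : c • (Ideal.Quotient.mk _ ((X : Polynomial k)^n) : Qmod k a) =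
            Ideal.Quotient.mk _ (c • (X : Polynomial k)^n) := rfl
        rw [h2]
        congr 1
        rw [Polynomial.smul_eq_C_mul, C_mul_X_pow_eq_monomial]
      rw [this]
      exact Submodule.smul_mem _ _ (Submodule.subset_span ⟨n, h, rfl⟩)
    · have : (Ideal.Quotient.mk _ ((monomial n) c) : Qmod k a) = 0 := by
        rw [Ideal.Quotient.eq_zero_iff_mem, Ideal.mem_span_singleton,
          ← C_mul_X_pow_eq_monomial]
        exact dvd_mul_of_dvd_right (pow_dvd_pow X h) _
      rw [this]
      exact Submodule.zero_mem _

instance : Module.Finite k (Qmod k a) :=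
  ⟨Submodule.fg_def.2 ⟨_, ((Set.finite_Iio a).image _), qmod_span_top k a⟩⟩

theorem coeffFn_ann (ha : 0 < a) (p : Polynomial k)
    (hp : p ∈ Ideal.span {(X : Polynomial k) ^ a}) : p • coeffFn k a ha = 0 := by
  rw [Ideal.mem_span_singleton] at hp
  apply LinearMap.ext
  intro w
  obtain ⟨r, rfl⟩ := Ideal.Quotient.mk_surjective w
  rw [LinearMap.zero_apply, dual_poly_smul_apply]
  have h1 : p • (Ideal.Quotient.mk _ r : Qmod k a) = Ideal.Quotient.mk _ (p * r) := rfl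
  rw [h1, coeffFn_mk k a ha]
  obtain ⟨s, rfl⟩ := hp
  have hdvd : (X : Polynomial k)^a ∣ X^a * s * r := ⟨s * r, by ring⟩
  exact (X_pow_dvd_iff.1 hdvd) _ (by omega)

/-- The self-duality pairing map on `k[X]/(X^a)`. -/
noncomputable def compT (ha : 0 < a) :
    Qmod k a →ₗ[Polynomial k] Module.Dual k (Qmod k a) :=
  Submodule.liftQ (Ideal.span {(X : Polynomial k) ^ a})
    (LinearMap.toSpanSingleton (Polynomial k) _ (coeffFn k a ha))
    (fun p hp => by
      rw [LinearMap.mem_ker, LinearMap.toSpanSingleton_apply]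
      exact coeffFn_ann k a ha p hp)

theorem compT_mk (ha : 0 < a) (p r : Polynomial k) :
    compT k a ha (Ideal.Quotient.mk _ p) (Ideal.Quotient.mk _ r) = (p * r).coeff (a - 1) := by
  have h1 : compT k a ha (Ideal.Quotient.mk _ p) = p • coeffFn k a ha := by
    simp [compT]
    rfl
  rw [h1, dual_poly_smul_apply]
  have h2 : p • (Ideal.Quotient.mk _ r : Qmod k a) = Ideal.Quotient.mk _ (p * r) := rfl
  rw [h2, coeffFn_mk k a ha]

theorem qmod_mk_monomial (n : ℕ) (c : k) :
    (Ideal.Quotient.mk (Ideal.span {(X : Polynomial k)^a}) ((monomial n) c)) =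
      c • Ideal.Quotient.mk _ ((X : Polynomial k)^n) := by
  have h2 : c • (Ideal.Quotient.mk _ ((X : Polynomial k)^n) : Qmod k a) =
      Ideal.Quotient.mk _ (c • (X : Polynomial k)^n) := rfl
  rw [h2]
  congr 1
  rw [Polynomial.smul_eq_C_mul, C_mul_X_pow_eq_monomial]

theorem qmod_mk_X_pow_eq_zero {n : ℕ} (h : a ≤ n) :
    (Ideal.Quotient.mk (Ideal.span {(X : Polynomial k)^a}) ((X : Polynomial k)^n)) = 0 := by
  rw [Ideal.Quotient.eq_zero_iff_mem, Ideal.mem_span_singleton]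
  exact pow_dvd_pow X h

theorem compT_bijective (ha : 0 < a) : Function.Bijective (compT k a ha) := by
  constructor
  · refine LinearMap.ker_eq_bot.1 ((Submodule.eq_bot_iff _).2 ?_)
    intro z hz
    obtain ⟨p, rfl⟩ := Ideal.Quotient.mk_surjective z
    rw [LinearMap.mem_ker] at hz
    rw [Ideal.Quotient.eq_zero_iff_mem, Ideal.mem_span_singleton, X_pow_dvd_iff]
    intro d hd
    have h2 := LinearMap.congr_fun hz (Ideal.Quotient.mk _ ((X : Polynomial k) ^ (a - 1 - d)))
    rw [compT_mk, LinearMap.zero_apply] at h2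
    rwa [coeff_mul_X_pow', if_pos (by omega : a - 1 - d ≤ a - 1),
      show a - 1 - (a - 1 - d) = d by omega] at h2
  · intro f
    classical
    set P : Polynomial k := ∑ i ∈ Finset.range a,
      C (f (Ideal.Quotient.mk _ ((X : Polynomial k) ^ (a - 1 - i)))) * X ^ i with hP
    refine ⟨Ideal.Quotient.mk _ P, ?_⟩
    have key : ∀ n : ℕ, compT k a ha (Ideal.Quotient.mk _ P)
        (Ideal.Quotient.mk _ ((X : Polynomial k) ^ n)) =
        f (Ideal.Quotient.mk _ ((X : Polynomial k) ^ n)) := by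
      intro n
      rcases lt_or_ge n a with h | h
      · rw [compT_mk, coeff_mul_X_pow', if_pos (by omega : n ≤ a - 1), hP]
        rw [finset_sum_coeff]
        have hcoeff : ∀ i ∈ Finset.range a,
            (C (f (Ideal.Quotient.mk _ ((X : Polynomial k) ^ (a - 1 - i)))) * X ^ i).coeff
              (a - 1 - n) =
            if a - 1 - n = i then f (Ideal.Quotient.mk _ ((X : Polynomial k) ^ (a - 1 - i)))
              else 0 := by
          intro i _
          rw [coeff_C_mul, coeff_X_pow]
          split_ifs with h1 <;> simp_all
        rw [Finset.sum_congr rfl hcoeff, Finset.sum_ite_eq (Finset.range a) (a - 1 - n)]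
        rw [if_pos (Finset.mem_range.2 (by omega : a - 1 - n < a))]
        have harith : a - 1 - (a - 1 - n) = n := by omega
        rw [harith]
      · rw [qmod_mk_X_pow_eq_zero k a h, map_zero, map_zero]
    refine LinearMap.ext fun w => ?_
    obtain ⟨r, rfl⟩ := Ideal.Quotient.mk_surjective w
    induction r using Polynomial.induction_on' with
    | add p q hp hq => rw [map_add, map_add, map_add, hp, hq]
    | monomial n c =>
      rw [qmod_mk_monomial, LinearMap.map_smul, LinearMap.map_smul, key n]

/-- Self-duality of `k[X]/(X^a)` as a `k[X]`-module. -/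
noncomputable def compEquiv (ha : 0 < a) :
    Qmod k a ≃ₗ[Polynomial k] Module.Dual k (Qmod k a) :=
  LinearEquiv.ofBijective (compT k a ha) (compT_bijective k a ha)

end Component

/-! ### Duals of finite products -/

section PiDual
variable {k : Type*} [Field k] {n : ℕ} (M : Fin n → Type*)
  [∀ i, AddCommGroup (M i)] [∀ i, Module k (M i)] [∀ i, Module (Polynomial k) (M i)]
  [∀ i, IsScalarTower k (Polynomial k) (M i)]

/-- The dual of a finite product is the product of duals, `k[X]`-linearly. -/
noncomputable def polyDualPi :
    Module.Dual k (∀ i, M i) ≃ₗ[Polynomial k] ∀ i, Module.Dual k (M i) :=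
  LinearEquiv.ofLinear
    { toFun := fun φ i => φ.comp (LinearMap.single k M i)
      map_add' := fun φ ψ => rfl
      map_smul' := fun p φ => by
        funext i
        refine LinearMap.ext fun m => ?_
        show (p • φ) (Pi.single i m) =
          ((p • (fun j => φ.comp (LinearMap.single k M j))) i) m
        rw [dual_poly_smul_apply]
        rw [show ((p • (fun j => φ.comp (LinearMap.single k M j))) i) m
          = (p • (φ.comp (LinearMap.single k M i))) m from rfl]
        rw [dual_poly_smul_apply]
        simp only [LinearMap.comp_apply, LinearMap.coe_single]
        try rw [← Pi.single_smul] }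
    { toFun := fun g => ∑ i, (g i).comp (LinearMap.proj i)
      map_add' := fun g h => by
        rw [← Finset.sum_add_distrib]
        congr 1
      map_smul' := fun p g => by
        refine LinearMap.ext fun v => ?_
        rw [RingHom.id_apply, dual_poly_smul_apply, LinearMap.coe_sum, Finset.sum_apply,
          LinearMap.coe_sum, Finset.sum_apply]
        refine Finset.sum_congr rfl fun i _ => ?_
        rw [show (((p • g) i).comp (LinearMap.proj i)) v
          = (p • (g i)) (v i) from rfl]
        rw [dual_poly_smul_apply]
        rfl }
    (by
      refine LinearMap.ext fun g => ?_
      funext j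
      refine LinearMap.ext fun m => ?_
      show ((∑ i, (g i).comp (LinearMap.proj i)).comp (LinearMap.single k M j)) m = g j m
      rw [LinearMap.comp_apply, LinearMap.coe_sum, Finset.sum_apply]
      rw [Finset.sum_eq_single j]
      · simp
      · intro i _ hij
        simp [LinearMap.proj, Pi.single_eq_of_ne hij]
      · intro h; exact absurd (Finset.mem_univ j) h)
    (by
      refine LinearMap.ext fun φ => LinearMap.ext fun v => ?_
      simp only [LinearMap.comp_apply, LinearMap.id_apply, LinearMap.coe_mk, AddHom.coe_mk,
        LinearMap.coe_sum, Finset.sum_apply, LinearMap.coe_single]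
      rw [← map_sum]
      congr 1
      funext j
      rw [Finset.sum_apply]
      exact Fintype.sum_pi_single j v)

end PiDual

/-! ### Partitions have positive parts below their length -/

theorem Ptn.parts_pos (l : Ptn) (i : Fin l.len) : 0 < l.parts (i : ℕ) := by
  by_contra h
  have hzero : l.parts (i : ℕ) = 0 := by omega
  have hsub : {j | l.parts j ≠ 0} ⊆ Set.Iio (i : ℕ) := by
    intro j hj
    by_contra hj2
    exact hj (Nat.le_antisymm (hzero ▸ l.antitone' (not_lt.1 hj2)) (Nat.zero_le _))
  have hle : l.len ≤ (i : ℕ) := by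
    have h2 := Set.ncard_le_ncard hsub (Set.finite_Iio _)
    rwa [show Set.Iio (i : ℕ) = ↑(Finset.range (i : ℕ)) by rw [Finset.coe_range],
      Set.ncard_coe_finset, Finset.card_range] at h2
  exact absurd i.2 (not_lt.2 hle)

/-! ### Instances and duality for `Imod` -/

section ImodInst
variable (k : Type*) [Field k] (l : Ptn)

noncomputable instance : Module k (Imod k l) :=
  inferInstanceAs (Module k (∀ i : Fin l.len, Qmod k (l.parts (i : ℕ))))

instance : IsScalarTower k (Polynomial k) (Imod k l) :=
  inferInstanceAs (IsScalarTower k (Polynomial k) (∀ i : Fin l.len, Qmod k (l.parts (i : ℕ))))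

instance : Module.Finite k (Imod k l) :=
  inferInstanceAs (Module.Finite k (∀ i : Fin l.len, Qmod k (l.parts (i : ℕ))))

/-- Self-duality of `I_λ`. -/
noncomputable def imodDualEquiv : Module.Dual k (Imod k l) ≃ₗ[Polynomial k] Imod k l :=
  (polyDualPi (fun i : Fin l.len => Qmod k (l.parts (i : ℕ)))).trans
    (LinearEquiv.piCongrRight
      (fun i : Fin l.len => (compEquiv k (l.parts (i : ℕ)) (Ptn.parts_pos l i)).symm))

end ImodInst

/-! ### The main counting argument -/

theorem hallNum_le (k : Type*) [Field k] [Fintype k] (l m n : Ptn) :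
    hallNum k l m n ≤ hallNum k l n m := by
  classical
  have hfinM : Finite (Imod k l) := Module.finite_of_finite k
  have hfinSub : Finite (Submodule (Polynomial k) (Imod k l)) :=
    Finite.of_injective (fun N => (N : Set (Imod k l))) SetLike.coe_injective
  set g : Module.Dual k (Imod k l) ≃ₗ[Polynomial k] Imod k l := imodDualEquiv k l with hg
  set Φ : Submodule (Polynomial k) (Imod k l) → Submodule (Polynomial k) (Imod k l) :=
    fun N => (polyAnn N).map (g : Module.Dual k (Imod k l) →ₗ[Polynomial k] Imod k l) with hΦ
  have hΦinj : Function.Injective Φ := by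
    intro N N' h
    apply polyAnn_inj (k := k)
    exact Submodule.map_injective_of_injective g.injective h
  have key : ∀ (N : Submodule (Polynomial k) (Imod k l)),
      (Nonempty ((↥N) ≃ₗ[Polynomial k] Imod k n) ∧
        Nonempty ((Imod k l ⧸ N) ≃ₗ[Polynomial k] Imod k m)) →
      (Nonempty ((↥(Φ N)) ≃ₗ[Polynomial k] Imod k m) ∧
        Nonempty ((Imod k l ⧸ Φ N) ≃ₗ[Polynomial k] Imod k n)) := by
    rintro N ⟨⟨e1⟩, ⟨e2⟩⟩
    constructor
    · exact ⟨(((g.submoduleMap (polyAnn N)).symm.trans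
        (polyAnnEquiv N).symm).trans (polyDualCongr e2.symm)).trans (imodDualEquiv k m)⟩
    · exact ⟨(((Submodule.Quotient.equiv (polyAnn N) (Φ N) g rfl).symm.trans
        (polyQuotAnnEquiv N)).trans (polyDualCongr e1.symm)).trans (imodDualEquiv k n)⟩
  exact Nat.card_le_card_of_injective
    (fun N => ⟨Φ N.1, key N.1 N.2⟩)
    (fun N N' h => Subtype.ext (hΦinj (congrArg Subtype.val h)))

/-- For every prime power `q` and all partitions `λ, μ, ν`, the Hall
numbers satisfy `g^λ_{μ,ν} = g^λ_{ν,μ}`. -/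
theorem hallNum_symm (q : ℕ) (hq : IsPrimePow q)
    (k : Type) [Field k] [Fintype k] (hk : Fintype.card k = q)
    (lam mu nu : Ptn) :
    hallNum k lam mu nu = hallNum k lam nu mu :=
  le_antisymm (hallNum_le k lam mu nu) (hallNum_le k lam nu mu)
end

section
/- Antipode identity: let q be a prime power (or any rational q with q ∉ {0, ±1}). For every partition λ with |λ| = n ≥ 1, Σ_{u=0}^{n} (−1)^u Σ_{ν: |ν| = n−u} q^{n(λ) − n(ν)} ∏_{i≥1} [λ'_i − λ'_{i+1} choose λ'_i − ν'_i]_{1/q} = 0, where the inner sum is over all partitions ν of n − u (the product vanishes by convention unless ν ⊆ λ and λ − ν is a vertical strip). (This identity is the combinatorial core of the formula S([I_{(1^n)}]) = (−1)^n q^{−n(n−1)/2} Σ_{|λ|=n} [I_λ] for the antipode of the classical Hall algebra.) -/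
open scoped BigOperators

section AntipodeAux

open Finset

/-- A finite lower set of naturals is an initial segment. -/
lemma lowerSet_eq_Iio {S : Set ℕ} (hS : S.Finite)
    (hlow : ∀ {a b : ℕ}, a ≤ b → b ∈ S → a ∈ S) :
    S = Set.Iio S.ncard := by
  rcases S.eq_empty_or_nonempty with h | h
  · subst h
    simp only [Set.ncard_empty]
    ext x; simp
  · have hne : hS.toFinset.Nonempty := by rwa [Set.Finite.toFinset_nonempty]
    set M := hS.toFinset.max' hne with hM
    have hMmem : M ∈ S := by
      have := hS.toFinset.max'_mem hne
      rwa [Set.Finite.mem_toFinset] at this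
    have hSeq : S = Set.Iic M := by
      apply Set.eq_of_subset_of_subset
      · intro x hx
        exact hS.toFinset.le_max' x (by rwa [Set.Finite.mem_toFinset])
      · intro x hx
        exact hlow hx hMmem
    rw [hSeq]
    have h1 : (Set.Iic M).ncard = M + 1 := by
      rw [← Finset.coe_Iic, Set.ncard_coe_finset, Nat.card_Iic]
    rw [h1]
    ext x; simp [Nat.lt_succ_iff]

lemma ncard_Iio_nat (m : ℕ) : (Set.Iio m).ncard = m := by
  rw [← Finset.coe_Iio, Set.ncard_coe_finset, Nat.card_Iio]

/-- Galois key: for an antitone eventually-zero `f`,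
`j < #{k | i < f k} ↔ i < f j`. -/
lemma antitone_lt_ncard_iff {f : ℕ → ℕ} (hf : Antitone f) {N : ℕ}
    (hN : ∀ k, N ≤ k → f k = 0) (i j : ℕ) :
    j < Set.ncard {k | i < f k} ↔ i < f j := by
  have hfin : ({k | i < f k} : Set ℕ).Finite := by
    apply Set.Finite.subset (Set.finite_Iio N)
    intro k hk
    simp only [Set.mem_setOf_eq] at hk
    simp only [Set.mem_Iio]
    by_contra hkN
    push_neg at hkN
    rw [hN k hkN] at hk; omega
  have heq : {k | i < f k} = Set.Iio ({k | i < f k} : Set ℕ).ncard :=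
    lowerSet_eq_Iio hfin (fun {a b} hab hb => lt_of_lt_of_le hb (hf hab))
  constructor
  · intro h
    have : j ∈ Set.Iio ({k | i < f k} : Set ℕ).ncard := h
    rw [← heq] at this; exact this
  · intro h
    have : j ∈ {k | i < f k} := h
    rw [heq] at this; exact this

namespace Ptn

lemma ext' {l m : Ptn} (h : l.parts = m.parts) : l = m := by
  cases l; cases m; simpa using h

lemma eventually_zero (l : Ptn) : ∃ N, ∀ j, N ≤ j → l.parts j = 0 := by
  obtain ⟨N, hN⟩ := l.exists_zero
  exact ⟨N, fun j hj => Nat.le_zero.mp (hN ▸ l.antitone' hj)⟩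

lemma lt_conj_iff (l : Ptn) (i j : ℕ) : j < l.conj (i + 1) ↔ i < l.parts j := by
  obtain ⟨N, hN⟩ := l.eventually_zero
  have := antitone_lt_ncard_iff l.antitone' hN i j
  rw [← this]
  have hset : {k | i < l.parts k} = {k | i + 1 ≤ l.parts k} := by
    ext k; simp only [Set.mem_setOf_eq]; omega
  rw [Ptn.conj, hset]

lemma conj_eq_zero (l : Ptn) {i : ℕ} (h : l.parts 0 < i) : l.conj i = 0 := by
  have : {j | i ≤ l.parts j} = (∅ : Set ℕ) := by
    ext j
    simp only [Set.mem_setOf_eq, Set.mem_empty_iff_false, iff_false, not_le]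
    exact lt_of_le_of_lt (l.antitone' (Nat.zero_le j)) h
  rw [Ptn.conj, this, Set.ncard_empty]

lemma size_eq_sum (l : Ptn) {N : ℕ} (hN : ∀ j, N ≤ j → l.parts j = 0) :
    l.size = ∑ j ∈ Finset.range N, l.parts j := by
  apply finsum_eq_sum_of_support_subset
  intro j hj
  simp only [Function.mem_support] at hj
  simp only [Finset.coe_range, Set.mem_Iio]
  by_contra h
  exact hj (hN j (by omega))

lemma nstat_eq_sum (l : Ptn) {N : ℕ} (hN : ∀ j, N ≤ j → l.parts j = 0) :
    l.nstat = ∑ j ∈ Finset.range N, j * l.parts j := by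
  apply finsum_eq_sum_of_support_subset
  intro j hj
  simp only [Function.mem_support] at hj
  simp only [Finset.coe_range, Set.mem_Iio]
  by_contra h
  push_neg at h
  exact hj (by rw [hN j h]; ring)

lemma filter_conj_eq (l : Ptn) {N : ℕ} (hN : ∀ j, N ≤ j → l.parts j = 0) (i : ℕ) :
    (Finset.range N).filter (fun j => i < l.parts j) = Finset.range (l.conj (i + 1)) := by
  ext j
  simp only [Finset.mem_filter, Finset.mem_range]
  constructor
  · rintro ⟨_, h⟩; exact (l.lt_conj_iff i j).mpr h
  · intro h
    have h2 : i < l.parts j := (l.lt_conj_iff i j).mp h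
    refine ⟨?_, h2⟩
    by_contra hjN
    push_neg at hjN
    rw [hN j hjN] at h2; omega

lemma sum_ite_lt {M P : ℕ} (hP : P ≤ M) :
    ∑ i ∈ Finset.range M, (if i < P then (1:ℕ) else 0) = P := by
  rw [← Finset.sum_filter]
  have : (Finset.range M).filter (fun i => i < P) = Finset.range P := by
    ext x; simp only [Finset.mem_filter, Finset.mem_range]; omega
  simp [this]

lemma size_eq_conj_sum (l : Ptn) {M : ℕ} (hM : l.parts 0 ≤ M) :
    l.size = ∑ i ∈ Finset.range M, l.conj (i + 1) := by
  classical
  obtain ⟨N, hN⟩ := l.eventually_zero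
  rw [l.size_eq_sum hN]
  have key : ∀ j ∈ Finset.range N, l.parts j =
      ∑ i ∈ Finset.range M, (if i < l.parts j then (1:ℕ) else 0) := by
    intro j _
    exact (sum_ite_lt (le_trans (l.antitone' (Nat.zero_le j)) hM)).symm
  rw [Finset.sum_congr rfl key, Finset.sum_comm]
  refine Finset.sum_congr rfl (fun i _ => ?_)
  rw [← Finset.sum_filter, l.filter_conj_eq hN i]
  simp

lemma nstat_eq_conj_sum (l : Ptn) {M : ℕ} (hM : l.parts 0 ≤ M) :
    l.nstat = ∑ i ∈ Finset.range M, ∑ j ∈ Finset.range (l.conj (i + 1)), j := by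
  classical
  obtain ⟨N, hN⟩ := l.eventually_zero
  rw [l.nstat_eq_sum hN]
  have key : ∀ j ∈ Finset.range N, j * l.parts j =
      ∑ i ∈ Finset.range M, (if i < l.parts j then j else 0) := by
    intro j _
    rw [← Finset.sum_filter]
    have : (Finset.range M).filter (fun i => i < l.parts j) =
        Finset.range (l.parts j) := by
      have hP : l.parts j ≤ M := le_trans (l.antitone' (Nat.zero_le j)) hM
      ext x; simp only [Finset.mem_filter, Finset.mem_range]; omega
    rw [this]
    simp [mul_comm]
  rw [Finset.sum_congr rfl key, Finset.sum_comm]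
  refine Finset.sum_congr rfl (fun i _ => ?_)
  rw [← Finset.sum_filter, l.filter_conj_eq hN i]

lemma eq_of_conj_eq {l m : Ptn} (h : ∀ i, l.conj (i + 1) = m.conj (i + 1)) :
    l = m := by
  apply ext'
  funext j
  have key : ∀ (a b : Ptn), (∀ i, a.conj (i + 1) = b.conj (i + 1)) →
      a.parts j ≤ b.parts j := by
    intro a b hab
    rcases Nat.eq_zero_or_pos (a.parts j) with h0 | h0
    · omega
    · obtain ⟨k, hk⟩ : ∃ k, a.parts j = k + 1 := ⟨a.parts j - 1, by omega⟩
      have : j < a.conj (k + 1) := (a.lt_conj_iff k j).mpr (by omega)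
      rw [hab k] at this
      have := (b.lt_conj_iff k j).mp this
      omega
  exact le_antisymm (key l m h) (key m l (fun i => (h i).symm))

lemma parts_zero_le_size (l : Ptn) : l.parts 0 ≤ l.size := by
  obtain ⟨N, hN⟩ := l.eventually_zero
  rw [l.size_eq_sum (N := N + 1) (fun j hj => hN j (by omega))]
  exact Finset.single_le_sum (f := fun j => l.parts j) (fun _ _ => Nat.zero_le _)
    (Finset.mem_range.mpr (by omega))

lemma parts_eq_zero_of_size_le (l : Ptn) {j : ℕ} (hj : l.size ≤ j) :
    l.parts j = 0 := by
  by_contra h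
  obtain ⟨N, hN⟩ := l.eventually_zero
  have hNj : j < N := by
    by_contra hN2; push_neg at hN2; exact h (hN j hN2)
  have : ∀ i ∈ Finset.range (j + 1), 1 ≤ l.parts i := by
    intro i hi
    simp only [Finset.mem_range] at hi
    have := l.antitone' (show i ≤ j by omega)
    omega
  have hsub : Finset.range (j+1) ⊆ Finset.range N := by
    apply Finset.range_subset_range.mpr; omega
  have h1 : j + 1 ≤ ∑ i ∈ Finset.range (j+1), l.parts i := by
    calc j + 1 = ∑ _i ∈ Finset.range (j+1), 1 := by simp
    _ ≤ _ := Finset.sum_le_sum this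
  have h2 : ∑ i ∈ Finset.range (j+1), l.parts i ≤ ∑ i ∈ Finset.range N, l.parts i :=
    Finset.sum_le_sum_of_subset hsub
  rw [← l.size_eq_sum hN] at h2
  omega

/-- Finiteness of the set of partitions of any size `≤ n`. -/
lemma finite_size_le (n : ℕ) : {l : Ptn | l.size ≤ n}.Finite := by
  rw [← Set.finite_coe_iff]
  set F : {l : Ptn | l.size ≤ n} → (Fin (n+1) → Fin (n+1)) :=
    fun l j => ⟨l.1.parts j, by
      have h1 := le_trans (l.1.antitone' (Nat.zero_le j))
        (le_trans l.1.parts_zero_le_size l.2)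
      omega⟩ with hFdef
  have hF : Function.Injective F := by
    rintro ⟨l, hl⟩ ⟨m, hm⟩ hlm
    simp only [Set.mem_setOf_eq] at hl hm
    have hp : l.parts = m.parts := by
      funext j
      rcases Nat.lt_or_ge j (n+1) with hj | hj
      · have h2 := congrFun hlm ⟨j, hj⟩
        have h3 := congrArg Fin.val h2
        simpa [hFdef] using h3
      · rw [l.parts_eq_zero_of_size_le (by omega), m.parts_eq_zero_of_size_le (by omega)]
    simpa using ext' hp
  exact Finite.of_injective F hF

lemma finite_size_eq (k : ℕ) : {l : Ptn | l.size = k}.Finite :=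
  (finite_size_le k).subset (fun l hl => le_of_eq hl)

end Ptn

end AntipodeAux

section QBinomAux

lemma qPoch_zero (t x : ℚ) : qPoch x t 0 = 1 := by simp [qPoch]

lemma qPoch_succ (t x : ℚ) (n : ℕ) :
    qPoch x t (n + 1) = qPoch x t n * (1 - x * t ^ n) := by
  rw [qPoch, Finset.prod_range_succ]; rfl

lemma qPoch_succ' (t x : ℚ) (n : ℕ) :
    qPoch x t (n + 1) = (1 - x) * qPoch (x * t) t n := by
  rw [qPoch, Finset.prod_range_succ', qPoch]
  simp only [pow_zero, mul_one]
  rw [mul_comm]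
  congr 1
  refine Finset.prod_congr rfl (fun i _ => ?_)
  ring

/-- For `q ∉ {0, ±1}`, powers `q^k ≠ 1` for `k ≥ 1`. -/
lemma pow_ne_one_of_ne {q : ℚ} (hq0 : q ≠ 0) (hq1 : q ≠ 1) (hqm1 : q ≠ -1)
    {k : ℕ} (hk : 1 ≤ k) : q ^ k ≠ 1 := by
  intro h
  have habs : |q| ^ k = 1 := by
    rw [← abs_pow, h, abs_one]
  rcases lt_trichotomy |q| 1 with h1 | h1 | h1
  · have : |q| ^ k < 1 := pow_lt_one₀ (abs_nonneg q) h1 (by omega)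
    linarith
  · rcases (abs_eq (by norm_num : (0:ℚ) ≤ 1)).mp h1 with h2 | h2
    · exact hq1 h2
    · exact hqm1 h2
  · have : 1 < |q| ^ k := one_lt_pow₀ h1 (by omega)
    linarith

lemma qPoch_ne_zero {t : ℚ} (ht : ∀ k : ℕ, 1 ≤ k → t ^ k ≠ 1) (m : ℕ) :
    qPoch t t m ≠ 0 := by
  rw [qPoch]
  apply Finset.prod_ne_zero_iff.mpr
  intro i _ h
  have h2 : t ^ (i + 1) = 1 := by
    have h3 : t * t ^ i = 1 := by linarith [sub_eq_zero.mp h]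
    rw [pow_succ, mul_comm]
    exact h3
  exact ht (i+1) (by omega) h2

/-- Pascal recurrence: `[n+1, k+1] = t^(k+1) [n, k+1] + [n, k]`. -/
lemma qBinom_pascal {t : ℚ} (ht : ∀ m, qPoch t t m ≠ 0) (n k : ℕ) :
    qBinom t (n+1) (k+1) = t^(k+1) * qBinom t n (k+1) + qBinom t n k := by
  rcases lt_trichotomy k n with h | h | h
  · obtain ⟨j, hj⟩ : ∃ j, n = k + 1 + j := ⟨n - (k+1), by omega⟩
    subst hj
    rw [qBinom, qBinom, qBinom, if_pos (by omega), if_pos (by omega), if_pos (by omega)]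
    rw [show k + 1 + j + 1 - (k + 1) = j + 1 by omega,
        show k + 1 + j - (k + 1) = j by omega,
        show k + 1 + j - k = j + 1 by omega]
    rw [show k + 1 + j + 1 = (k + 1 + j) + 1 by ring, qPoch_succ]
    rw [qPoch_succ t t j, qPoch_succ t t k]
    have h1 := ht (k + 1 + j)
    have h2 := ht k
    have h3 := ht j
    have h4 : (1 : ℚ) - t * t ^ k ≠ 0 := by
      have h6 := ht (k+1); rw [qPoch_succ] at h6
      exact fun hz => h6 (by rw [hz, mul_zero])
    have h5 : (1 : ℚ) - t * t ^ j ≠ 0 := by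
      have h6 := ht (j+1); rw [qPoch_succ] at h6
      exact fun hz => h6 (by rw [hz, mul_zero])
    field_simp
    ring
  · subst h
    rw [qBinom, qBinom, qBinom, if_pos (le_refl _), if_neg (by omega), if_pos (le_refl _)]
    rw [Nat.sub_self, Nat.sub_self, qPoch_zero]
    rw [mul_one, mul_one, div_self (ht (k+1)), div_self (ht k)]
    ring
  · rw [qBinom, qBinom, qBinom, if_neg (by omega), if_neg (by omega), if_neg (by omega)]
    ring

lemma qBinom_zero_right {t : ℚ} (ht : ∀ m, qPoch t t m ≠ 0) (n : ℕ) :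
    qBinom t n 0 = 1 := by
  rw [qBinom, if_pos (Nat.zero_le n), qPoch_zero, Nat.sub_zero, one_mul,
    div_self (ht n)]

lemma qBinom_of_gt {t : ℚ} {n r : ℕ} (h : n < r) : qBinom t n r = 0 := by
  rw [qBinom, if_neg (by omega)]

/-- The q-binomial theorem (finite form). -/
lemma q_binom_theorem {t : ℚ} (ht : ∀ m, qPoch t t m ≠ 0) :
    ∀ (n : ℕ) (x : ℚ),
      ∑ a ∈ Finset.range (n+1), qBinom t n a * t ^ (a.choose 2) * (-x) ^ a
        = qPoch x t n := by
  intro n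
  induction n with
  | zero =>
    intro x
    simp [qBinom_zero_right ht, qPoch_zero]
  | succ n ih =>
    intro x
    set f : ℕ → ℚ := fun a => qBinom t (n+1) a * t ^ (a.choose 2) * (-x) ^ a with hf
    set g : ℕ → ℚ := fun b => qBinom t n b * t ^ (b.choose 2 + b) * (-x) ^ b with hg
    set S : ℚ := ∑ a ∈ Finset.range (n+1), g a with hS
    have hG : S = qPoch (t * x) t n := by
      rw [hS, ← ih (t * x)]
      refine Finset.sum_congr rfl (fun a _ => ?_)
      rw [hg]
      simp only [pow_add]
      ring
    have h2 : ∀ a : ℕ, f (a+1) = g (a+1) + (-x) * g a := by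
      intro a
      rw [hf, hg]
      simp only
      rw [qBinom_pascal ht n a]
      rw [show (a+1).choose 2 = a.choose 1 + a.choose 2 from Nat.choose_succ_succ a 1,
          Nat.choose_one_right]
      simp only [pow_add, pow_succ]
      ring
    have hg0 : g 0 = 1 := by
      rw [hg]; simp [qBinom_zero_right ht]
    have hgn : g (n+1) = 0 := by
      rw [hg]; simp [qBinom_of_gt (by omega : n < n + 1)]
    have hf0 : f 0 = 1 := by
      rw [hf]; simp [qBinom_zero_right ht]
    have h3 : ∑ a ∈ Finset.range (n+1), g (a+1) = S - 1 := by
      have e1 : ∑ a ∈ Finset.range (n+2), g a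
          = ∑ a ∈ Finset.range (n+1), g (a+1) + g 0 := Finset.sum_range_succ' g (n+1)
      have e2 : ∑ a ∈ Finset.range (n+2), g a = S + g (n+1) := Finset.sum_range_succ g (n+1)
      rw [hgn] at e2
      rw [hg0] at e1
      linarith
    calc ∑ a ∈ Finset.range (n+1+1), qBinom t (n+1) a * t ^ (a.choose 2) * (-x) ^ a
        = ∑ a ∈ Finset.range (n+1), f (a+1) + f 0 := Finset.sum_range_succ' f (n+1)
      _ = ∑ a ∈ Finset.range (n+1), (g (a+1) + (-x) * g a) + 1 := by
          rw [hf0]; congr 1; exact Finset.sum_congr rfl (fun a _ => h2 a)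
      _ = (S - 1) + (-x) * S + 1 := by
          rw [Finset.sum_add_distrib, ← Finset.mul_sum, h3, ← hS]
      _ = (1 - x) * qPoch (x * t) t n := by
          rw [hG, mul_comm t x]; ring
      _ = qPoch x t (n+1) := (qPoch_succ' t x n).symm

end QBinomAux

section KeySum

/-- `gg c = 0 + 1 + ⋯ + (c-1)`. -/
def gg (c : ℕ) : ℕ := ∑ j ∈ Finset.range c, j

lemma gg_succ (c : ℕ) : gg (c + 1) = gg c + c := Finset.sum_range_succ _ c

lemma gg_add (d a : ℕ) : gg (d + a) = gg d + a * d + gg a := by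
  induction a with
  | zero => simp [gg]
  | succ a ih =>
    rw [show d + (a+1) = (d + a) + 1 by ring, gg_succ, ih, gg_succ]
    ring

lemma gg_choose (a : ℕ) : gg a = a.choose 2 := by
  induction a with
  | zero => simp [gg]
  | succ a ih =>
    rw [gg_succ, ih, show (a+1).choose 2 = a.choose 1 + a.choose 2 from
      Nat.choose_succ_succ a 1, Nat.choose_one_right]
    ring

lemma two_gg (a : ℕ) : 2 * gg a = a * (a - 1) := by
  rw [gg, ← Finset.sum_range_id_mul_two a]; ring

lemma gg_mono {b c : ℕ} (h : b ≤ c) : gg b ≤ gg c :=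
  Finset.sum_le_sum_of_subset (Finset.range_subset_range.mpr h)

lemma qBinomZ_natCast (t : ℚ) (m r : ℕ) :
    qBinomZ t (m : ℤ) (r : ℤ) = qBinom t m r := by
  by_cases h : r ≤ m
  · rw [qBinomZ, if_pos ⟨Int.natCast_nonneg r, by exact_mod_cast h⟩,
      qBinom, if_pos h]
    rw [show ((m:ℤ) - (r:ℤ)) = ((m - r : ℕ) : ℤ) by
      rw [Nat.cast_sub h]]
    rw [Int.toNat_natCast, Int.toNat_natCast, Int.toNat_natCast]
  · rw [qBinomZ, if_neg (by push_neg; intro _; exact_mod_cast by omega),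
      qBinom, if_neg h]

lemma qBinomZ_zero_zero (t : ℚ) : qBinomZ t 0 0 = 1 := by
  rw [qBinomZ, if_pos ⟨le_refl _, le_refl _⟩]
  simp [qPoch]

lemma qBinomZ_of_neg {t : ℚ} {n r : ℤ} (h : r < 0) : qBinomZ t n r = 0 := by
  rw [qBinomZ, if_neg (by omega)]

lemma qBinomZ_of_gt {t : ℚ} {n r : ℤ} (h : n < r) : qBinomZ t n r = 0 := by
  rw [qBinomZ, if_neg (by omega)]

lemma inv_poch_ne_zero {q : ℚ} (hq0 : q ≠ 0) (hq1 : q ≠ 1) (hqm1 : q ≠ -1) :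
    ∀ m : ℕ, qPoch q⁻¹ q⁻¹ m ≠ 0 := by
  apply qPoch_ne_zero
  intro k hk
  apply pow_ne_one_of_ne (inv_ne_zero hq0) _ _ hk
  · intro h; exact hq1 (inv_eq_one.mp h)
  · intro h
    apply hqm1
    rw [← inv_inv q, h]
    norm_num

/-- The key vanishing sum for a single column block. -/
lemma key_sum {q : ℚ} (hq0 : q ≠ 0) (hq1 : q ≠ 1) (hqm1 : q ≠ -1) (C : ℕ) (hC : 1 ≤ C) :
    ∑ b ∈ Finset.Icc 0 C,
      (-1 : ℚ) ^ (C - b) * q ^ (gg C - gg b) * qBinomZ q⁻¹ (C : ℤ) ((C : ℤ) - (b : ℤ))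
      = 0 := by
  have ht := inv_poch_ne_zero hq0 hq1 hqm1
  have hIcc : Finset.Icc 0 C = Finset.range (C + 1) := by
    ext x; simp only [Finset.mem_Icc, Finset.mem_range]; omega
  rw [hIcc]
  rw [← Finset.sum_range_reflect]
  have hterm : ∀ a ∈ Finset.range (C + 1),
      (-1 : ℚ) ^ (C - (C + 1 - 1 - a)) * q ^ (gg C - gg (C + 1 - 1 - a)) *
        qBinomZ q⁻¹ (C : ℤ) ((C : ℤ) - ((C + 1 - 1 - a : ℕ) : ℤ))
      = qBinom q⁻¹ C a * (q⁻¹) ^ (a.choose 2) * (-(q ^ (C - 1))) ^ a := by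
    intro a ha
    simp only [Finset.mem_range] at ha
    have haC : a ≤ C := by omega
    rw [show C + 1 - 1 - a = C - a by omega]
    rw [show C - (C - a) = a by omega]
    rw [show (C : ℤ) - ((C - a : ℕ) : ℤ) = (a : ℤ) by
      rw [Nat.cast_sub haC]; ring]
    rw [qBinomZ_natCast]
    -- exponent computation
    have hgadd : gg C = gg (C - a) + (a * (C - a) + gg a) := by
      have h1 := gg_add (C - a) a
      rw [Nat.sub_add_cancel haC] at h1
      omega
    have hkey : gg C - gg (C - a) = a * (C - a) + gg a := by omega
    have hexp : a * (C - a) + a * (a - 1) = (C - 1) * a := by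
      rcases Nat.eq_zero_or_pos a with h0 | h0
      · simp [h0]
      · have h1 : C - a + (a - 1) = C - 1 := by omega
        calc a * (C - a) + a * (a - 1) = a * ((C - a) + (a - 1)) := by ring
          _ = (C - 1) * a := by rw [h1, mul_comm]
    have h2 : q ^ (a * (C - a) + gg a) * q ^ (gg a) = q ^ ((C - 1) * a) := by
      rw [← pow_add]
      congr 1
      have h3 := two_gg a
      omega
    have e1 : q ^ (gg C - gg (C - a)) = (q ^ (C - 1)) ^ a * (q⁻¹) ^ (gg a) := by
      rw [hkey, inv_pow, eq_mul_inv_iff_mul_eq₀ (pow_ne_zero _ hq0), ← pow_mul]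
      exact h2
    rw [e1, ← gg_choose, neg_pow]
    ring
  rw [Finset.sum_congr rfl hterm]
  rw [q_binom_theorem ht C (q ^ (C - 1))]
  rw [qPoch]
  apply Finset.prod_eq_zero (Finset.mem_range.mpr (show C - 1 < C by omega))
  rw [← mul_pow, mul_inv_cancel₀ hq0, one_pow, sub_self]

end KeySum

section Assembly

lemma sum_sub' {ι : Type*} (s : Finset ι) (f g : ι → ℕ) (h : ∀ i ∈ s, g i ≤ f i) :
    ∑ i ∈ s, (f i - g i) = ∑ i ∈ s, f i - ∑ i ∈ s, g i := by
  induction s using Finset.cons_induction with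
  | empty => simp
  | cons a s ha ih =>
    rw [Finset.sum_cons, Finset.sum_cons, Finset.sum_cons,
      ih (fun i hi => h i (Finset.mem_cons_of_mem hi))]
    have h1 := h a (Finset.mem_cons_self a s)
    have h2 : ∑ i ∈ s, g i ≤ ∑ i ∈ s, f i :=
      Finset.sum_le_sum (fun i hi => h i (Finset.mem_cons_of_mem hi))
    omega

/-- Build a partition from its (antitone, eventually zero) conjugate data `b`,
where `b i` is intended as the `(i+1)`-st column length. -/
noncomputable def mkPtn (b : ℕ → ℕ) (hb : Antitone b) (L : ℕ)
    (hbL : ∀ i, L ≤ i → b i = 0) : Ptn where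
  parts := fun j => Set.ncard {i | j < b i}
  antitone' := by
    intro j j' hjj'
    apply Set.ncard_le_ncard
    · intro i hi
      exact lt_of_le_of_lt hjj' hi
    · apply Set.Finite.subset (Set.finite_Iio L)
      intro i hi
      simp only [Set.mem_setOf_eq] at hi
      simp only [Set.mem_Iio]
      by_contra h
      push_neg at h
      rw [hbL i h] at hi
      omega
  exists_zero := ⟨b 0, by
    have h : {i | b 0 < b i} = (∅ : Set ℕ) := by
      ext i
      simp only [Set.mem_setOf_eq, Set.mem_empty_iff_false, iff_false, not_lt]
      exact hb (Nat.zero_le i)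
    simp only [h, Set.ncard_empty]⟩

lemma mkPtn_conj (b : ℕ → ℕ) (hb : Antitone b) (L : ℕ)
    (hbL : ∀ i, L ≤ i → b i = 0) (i : ℕ) :
    (mkPtn b hb L hbL).conj (i + 1) = b i := by
  have hgal := antitone_lt_ncard_iff hb hbL
  have hset : {j | i + 1 ≤ (mkPtn b hb L hbL).parts j} = Set.Iio (b i) := by
    ext j
    simp only [Set.mem_setOf_eq, Set.mem_Iio]
    have : (mkPtn b hb L hbL).parts j = Set.ncard {k | j < b k} := rfl
    rw [show (i + 1 ≤ (mkPtn b hb L hbL).parts j) ↔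
      (i < (mkPtn b hb L hbL).parts j) from Iff.rfl, this]
    exact hgal j i
  rw [Ptn.conj, hset, ncard_Iio_nat]

/-- The per-column factor. -/
noncomputable def hcoF (q : ℚ) (lam : Ptn) (i b : ℕ) : ℚ :=
  (-1 : ℚ) ^ (lam.conj (i + 1) - b) * q ^ (gg (lam.conj (i + 1)) - gg b) *
    qBinomZ q⁻¹ ((lam.conj (i + 1) : ℤ) - (lam.conj (i + 2) : ℤ))
      ((lam.conj (i + 1) : ℤ) - (b : ℤ))

lemma hcoF_def (q : ℚ) (lam : Ptn) (i b : ℕ) : hcoF q lam i b =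
    (-1 : ℚ) ^ (lam.conj (i + 1) - b) * q ^ (gg (lam.conj (i + 1)) - gg b) *
      qBinomZ q⁻¹ ((lam.conj (i + 1) : ℤ) - (lam.conj (i + 2) : ℤ))
        ((lam.conj (i + 1) : ℤ) - (b : ℤ)) := rfl

end Assembly

/-- antipode identity: for any rational `q ∉ {0, ±1}` and any partition
`λ` with `|λ| = n ≥ 1`,
`Σ_{u=0}^{n} (−1)^u Σ_{|ν| = n−u} q^{n(λ)−n(ν)} ∏_{i≥1} [λ'ᵢ−λ'_{i+1} choose λ'ᵢ−ν'ᵢ]_{1/q} = 0`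
(the product vanishes by convention unless `ν ⊆ λ` and `λ − ν` is a vertical strip). -/
theorem antipode_identity (q : ℚ) (hq0 : q ≠ 0) (hq1 : q ≠ 1) (hqm1 : q ≠ -1)
    (n : ℕ) (hn : 1 ≤ n) (lam : Ptn) (hlam : lam.size = n) :
    ∑ u ∈ Finset.range (n + 1), (-1 : ℚ) ^ u *
      ∑ᶠ (nu : Ptn) (_ : nu.size = n - u),
        q ^ ((lam.nstat : ℤ) - (nu.nstat : ℤ)) *
          ∏ᶠ i : ℕ, qBinomZ q⁻¹
            ((lam.conj (i + 1) : ℤ) - (lam.conj (i + 2) : ℤ))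
            ((lam.conj (i + 1) : ℤ) - (nu.conj (i + 1) : ℤ))
      = 0 := by
  classical
  -- notation
  set w : Ptn → ℚ := fun nu =>
    q ^ ((lam.nstat : ℤ) - (nu.nstat : ℤ)) *
      ∏ᶠ i : ℕ, qBinomZ q⁻¹ ((lam.conj (i + 1) : ℤ) - (lam.conj (i + 2) : ℤ))
        ((lam.conj (i + 1) : ℤ) - (nu.conj (i + 1) : ℤ)) with hw
  set L : ℕ := lam.parts 0 with hLdef
  have hpartsL : lam.parts 0 ≤ L := le_of_eq hLdef.symm
  have hL1 : 1 ≤ L := by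
    by_contra h
    push_neg at h
    have hz : ∀ j, (0:ℕ) ≤ j → lam.parts j = 0 := by
      intro j _
      have h2 := lam.antitone' (Nat.zero_le j)
      omega
    have h3 := lam.size_eq_sum (N := 0) (fun j hj => hz j hj)
    simp only [Finset.range_zero, Finset.sum_empty] at h3
    omega
  have hcz : ∀ i, L < i → lam.conj i = 0 := fun i hi => lam.conj_eq_zero (by omega)
  have hsum_c : ∑ i ∈ Finset.range L, lam.conj (i + 1) = n := by
    rw [← lam.size_eq_conj_sum hpartsL, hlam]
  have hnstat : lam.nstat = ∑ i ∈ Finset.range L, gg (lam.conj (i + 1)) :=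
    lam.nstat_eq_conj_sum hpartsL
  -- the inner finsums are finite sums
  have hfin : ∀ k : ℕ, {nu : Ptn | nu.size = k}.Finite := Ptn.finite_size_eq
  set Tf : ℕ → Finset Ptn := fun k => (hfin k).toFinset with hTf
  have hTf_mem : ∀ k nu, nu ∈ Tf k ↔ nu.size = k := by
    intro k nu
    simp [hTf, Set.Finite.mem_toFinset]
  have step1 : ∀ u : ℕ,
      (∑ᶠ (nu : Ptn) (_ : nu.size = n - u),
        q ^ ((lam.nstat : ℤ) - (nu.nstat : ℤ)) *
          ∏ᶠ i : ℕ, qBinomZ q⁻¹ ((lam.conj (i + 1) : ℤ) - (lam.conj (i + 2) : ℤ))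
            ((lam.conj (i + 1) : ℤ) - (nu.conj (i + 1) : ℤ)))
      = ∑ nu ∈ Tf (n - u), w nu := by
    intro u
    exact finsum_cond_eq_sum_of_cond_iff _ (fun {x} _ => by rw [hTf_mem])
  rw [Finset.sum_congr rfl (fun u _ => by rw [step1 u] :
    ∀ u ∈ Finset.range (n+1), (-1:ℚ)^u * (∑ᶠ (nu : Ptn) (_ : nu.size = n - u),
      q ^ ((lam.nstat : ℤ) - (nu.nstat : ℤ)) *
        ∏ᶠ i : ℕ, qBinomZ q⁻¹ ((lam.conj (i + 1) : ℤ) - (lam.conj (i + 2) : ℤ))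
          ((lam.conj (i + 1) : ℤ) - (nu.conj (i + 1) : ℤ)))
      = (-1:ℚ)^u * ∑ nu ∈ Tf (n - u), w nu)]
  -- step 2: absorb the sign, over a big disjoint union
  set G : Ptn → ℚ := fun nu => (-1 : ℚ) ^ (n - nu.size) * w nu with hG
  set U : Finset Ptn := (Finset.range (n + 1)).biUnion (fun u => Tf (n - u)) with hU
  have hU_mem : ∀ nu : Ptn, nu ∈ U ↔ nu.size ≤ n := by
    intro nu
    rw [hU]
    simp only [Finset.mem_biUnion, Finset.mem_range]
    constructor
    · rintro ⟨u, hu, hs⟩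
      rw [hTf_mem] at hs
      omega
    · intro h
      exact ⟨n - nu.size, by omega, by rw [hTf_mem]; omega⟩
  have step2 : ∑ u ∈ Finset.range (n + 1), (-1 : ℚ) ^ u * ∑ nu ∈ Tf (n - u), w nu
      = ∑ nu ∈ U, G nu := by
    rw [hU, Finset.sum_biUnion]
    · refine Finset.sum_congr rfl (fun u hu => ?_)
      rw [Finset.mul_sum]
      refine Finset.sum_congr rfl (fun nu hnu => ?_)
      rw [hTf_mem] at hnu
      rw [Finset.mem_range] at hu
      rw [hG]
      simp only
      rw [show n - nu.size = u by omega]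
    · intro u hu v hv huv
      apply Finset.disjoint_left.mpr
      intro nu h1 h2
      rw [hTf_mem] at h1 h2
      simp only [Finset.mem_coe, Finset.mem_range] at hu hv
      omega
  rw [step2]
  -- step 3: restrict to the vertical-strip support
  set Vc : Ptn → Prop := fun nu => ∀ i : ℕ,
    lam.conj (i + 2) ≤ nu.conj (i + 1) ∧ nu.conj (i + 1) ≤ lam.conj (i + 1) with hVcdef
  have step3 : ∑ nu ∈ U, G nu = ∑ nu ∈ U.filter Vc, G nu := by
    refine (Finset.sum_filter_of_ne ?_).symm
    intro nu _ hne
    by_contra hVc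
    apply hne
    have hVc : ¬ ∀ i : ℕ,
      lam.conj (i + 2) ≤ nu.conj (i + 1) ∧ nu.conj (i + 1) ≤ lam.conj (i + 1) := hVc
    push_neg at hVc
    obtain ⟨i0, hi0⟩ := hVc
    set M0 : ℕ := max L (nu.parts 0) with hM0
    have hsupp : Function.mulSupport (fun i => qBinomZ q⁻¹
        ((lam.conj (i + 1) : ℤ) - (lam.conj (i + 2) : ℤ))
        ((lam.conj (i + 1) : ℤ) - (nu.conj (i + 1) : ℤ))) ⊆ ↑(Finset.range M0) := by
      intro i hi
      simp only [Function.mem_mulSupport] at hi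
      simp only [Finset.coe_range, Set.mem_Iio]
      by_contra h
      push_neg at h
      rw [hM0] at h
      have e1 : lam.conj (i + 1) = 0 := hcz _ (by omega)
      have e2 : lam.conj (i + 2) = 0 := hcz _ (by omega)
      have e3 : nu.conj (i + 1) = 0 := nu.conj_eq_zero (by omega)
      rw [e1, e2, e3] at hi
      simp only [Nat.cast_zero, sub_zero, sub_self] at hi
      exact hi (qBinomZ_zero_zero q⁻¹)
    have hB0 : qBinomZ q⁻¹
        ((lam.conj (i0 + 1) : ℤ) - (lam.conj (i0 + 2) : ℤ))
        ((lam.conj (i0 + 1) : ℤ) - (nu.conj (i0 + 1) : ℤ)) = 0 := by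
      by_cases hcase : nu.conj (i0 + 1) ≤ lam.conj (i0 + 1)
      · have hlow : nu.conj (i0 + 1) < lam.conj (i0 + 2) := by
          by_contra h
          push_neg at h
          have h9 := hi0 h
          omega
        apply qBinomZ_of_gt
        have : (nu.conj (i0 + 1) : ℤ) < (lam.conj (i0 + 2) : ℤ) := by exact_mod_cast hlow
        omega
      · apply qBinomZ_of_neg
        push_neg at hcase
        have : (lam.conj (i0 + 1) : ℤ) < (nu.conj (i0 + 1) : ℤ) := by exact_mod_cast hcase
        omega
    have hmem : i0 ∈ Finset.range M0 := by
      have h1 : i0 ∈ Function.mulSupport (fun i => qBinomZ q⁻¹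
          ((lam.conj (i + 1) : ℤ) - (lam.conj (i + 2) : ℤ))
          ((lam.conj (i + 1) : ℤ) - (nu.conj (i + 1) : ℤ))) := by
        rw [Function.mem_mulSupport, hB0]
        norm_num
      have h2 := hsupp h1
      simpa using h2
    have hprod : (∏ᶠ i : ℕ, qBinomZ q⁻¹
        ((lam.conj (i + 1) : ℤ) - (lam.conj (i + 2) : ℤ))
        ((lam.conj (i + 1) : ℤ) - (nu.conj (i + 1) : ℤ))) = 0 := by
      rw [finprod_eq_prod_of_mulSupport_subset _ hsupp]
      exact Finset.prod_eq_zero hmem hB0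
    rw [hG, hw]
    simp only
    rw [hprod]
    ring
  rw [step3]
  -- strip-support facts
  have hVfacts : ∀ nu : Ptn, (∀ i : ℕ,
        lam.conj (i + 2) ≤ nu.conj (i + 1) ∧ nu.conj (i + 1) ≤ lam.conj (i + 1)) →
      nu.parts 0 ≤ L ∧ nu.size = ∑ i ∈ Finset.range L, nu.conj (i + 1) ∧
        nu.nstat = ∑ i ∈ Finset.range L, gg (nu.conj (i + 1)) := by
    intro nu hVc
    have h1 : nu.parts 0 ≤ L := by
      by_contra h
      push_neg at h
      have h2 : 0 < nu.conj (L + 1) := (nu.lt_conj_iff L 0).mpr (by omega)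
      have h3 := (hVc L).2
      rw [hcz (L + 1) (by omega)] at h3
      omega
    exact ⟨h1, nu.size_eq_conj_sum h1, nu.nstat_eq_conj_sum h1⟩
  -- value identity on the strip support
  have hval : ∀ nu ∈ U.filter Vc,
      G nu = ∏ i ∈ Finset.range L, hcoF q lam i (nu.conj (i + 1)) := by
    intro nu hmem
    rw [Finset.mem_filter] at hmem
    have hVc : ∀ i : ℕ,
        lam.conj (i + 2) ≤ nu.conj (i + 1) ∧ nu.conj (i + 1) ≤ lam.conj (i + 1) := by
      have := hmem.2
      simpa [hVcdef] using this
    obtain ⟨hP0, hSz, hNs⟩ := hVfacts nu hVc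
    have hfp : (∏ᶠ i : ℕ, qBinomZ q⁻¹
        ((lam.conj (i + 1) : ℤ) - (lam.conj (i + 2) : ℤ))
        ((lam.conj (i + 1) : ℤ) - (nu.conj (i + 1) : ℤ)))
        = ∏ i ∈ Finset.range L, qBinomZ q⁻¹
          ((lam.conj (i + 1) : ℤ) - (lam.conj (i + 2) : ℤ))
          ((lam.conj (i + 1) : ℤ) - (nu.conj (i + 1) : ℤ)) := by
      apply finprod_eq_prod_of_mulSupport_subset
      intro i hi
      simp only [Function.mem_mulSupport] at hi
      simp only [Finset.coe_range, Set.mem_Iio]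
      by_contra h
      push_neg at h
      have e1 : lam.conj (i + 1) = 0 := hcz _ (by omega)
      have e2 : lam.conj (i + 2) = 0 := hcz _ (by omega)
      have e3 : nu.conj (i + 1) = 0 := by
        have := (hVc i).2
        omega
      rw [e1, e2, e3] at hi
      simp only [Nat.cast_zero, sub_self, sub_zero] at hi
      exact hi (qBinomZ_zero_zero q⁻¹)
    have hsign : ((-1 : ℚ)) ^ (n - nu.size)
        = ∏ i ∈ Finset.range L, (-1 : ℚ) ^ (lam.conj (i + 1) - nu.conj (i + 1)) := by
      rw [Finset.prod_pow_eq_pow_sum]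
      congr 1
      rw [sum_sub' _ _ _ (fun i _ => (hVc i).2), hsum_c, ← hSz]
    have hles : nu.nstat ≤ lam.nstat := by
      rw [hnstat, hNs]
      exact Finset.sum_le_sum (fun i _ => gg_mono (hVc i).2)
    have hqpow : q ^ ((lam.nstat : ℤ) - (nu.nstat : ℤ))
        = ∏ i ∈ Finset.range L, q ^ (gg (lam.conj (i + 1)) - gg (nu.conj (i + 1))) := by
      rw [Finset.prod_pow_eq_pow_sum]
      rw [show (lam.nstat : ℤ) - (nu.nstat : ℤ) = ((lam.nstat - nu.nstat : ℕ) : ℤ) by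
        rw [Nat.cast_sub hles], zpow_natCast]
      congr 1
      rw [sum_sub' _ _ _ (fun i _ => gg_mono (hVc i).2), ← hnstat, ← hNs]
    simp only [hG, hw]
    rw [hfp, hsign, hqpow, ← Finset.prod_mul_distrib, ← Finset.prod_mul_distrib]
    refine Finset.prod_congr rfl (fun i _ => ?_)
    rw [hcoF_def]
    ring
  -- the tuple parametrization
  set A : Finset ((i : ℕ) → i ∈ Finset.range L → ℕ) :=
    (Finset.range L).pi (fun i => Finset.Icc (lam.conj (i + 2)) (lam.conj (i + 1))) with hA
  set bf : ((i : ℕ) → i ∈ Finset.range L → ℕ) → ℕ → ℕ :=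
    fun p i => if h : i ∈ Finset.range L then p i h else 0 with hbf
  have hbf_van : ∀ p, ∀ i, L ≤ i → bf p i = 0 := by
    intro p i hi
    simp only [hbf]
    rw [dif_neg (by rw [Finset.mem_range]; omega)]
  have hbf_anti : ∀ p ∈ A, Antitone (bf p) := by
    intro p hp
    rw [hA, Finset.mem_pi] at hp
    apply antitone_nat_of_succ_le
    intro i
    rcases Nat.lt_or_ge (i + 1) L with h | h
    · have hi : i ∈ Finset.range L := Finset.mem_range.mpr (by omega)
      have hi1 : i + 1 ∈ Finset.range L := Finset.mem_range.mpr h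
      have b1 := Finset.mem_Icc.mp (hp (i + 1) hi1)
      have b0 := Finset.mem_Icc.mp (hp i hi)
      rw [show i + 1 + 1 = i + 2 from rfl] at b1
      simp only [hbf]
      rw [dif_pos hi1, dif_pos hi]
      omega
    · rw [hbf_van p (i + 1) h]
      exact Nat.zero_le _
  have step4 : ∑ nu ∈ U.filter Vc, G nu
      = ∑ p ∈ A, ∏ i ∈ Finset.range L, hcoF q lam i (bf p i) := by
    refine Finset.sum_bij' (fun nu _ => fun i _ => nu.conj (i + 1))
      (fun p hp => mkPtn (bf p) (hbf_anti p hp) L (hbf_van p)) ?_ ?_ ?_ ?_ ?_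
    · -- into A
      intro nu hmem
      rw [Finset.mem_filter] at hmem
      have hVc : ∀ i : ℕ,
          lam.conj (i + 2) ≤ nu.conj (i + 1) ∧ nu.conj (i + 1) ≤ lam.conj (i + 1) := by
        have := hmem.2
        simpa [hVcdef] using this
      rw [hA, Finset.mem_pi]
      intro i hi
      rw [Finset.mem_Icc]
      exact hVc i
    · -- into the filter
      intro p hp
      have hpi : ∀ i (hi : i ∈ Finset.range L),
          p i hi ∈ Finset.Icc (lam.conj (i + 2)) (lam.conj (i + 1)) := by
        rw [hA, Finset.mem_pi] at hp
        exact hp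
      have hconj : ∀ i, (mkPtn (bf p) (hbf_anti p hp) L (hbf_van p)).conj (i + 1)
          = bf p i := fun i => mkPtn_conj _ _ _ _ i
      have hbfle : ∀ i ∈ Finset.range L, bf p i ≤ lam.conj (i + 1) := by
        intro i hi
        simp only [hbf]
        rw [dif_pos hi]
        exact (Finset.mem_Icc.mp (hpi i hi)).2
      have hp0 : (mkPtn (bf p) (hbf_anti p hp) L (hbf_van p)).parts 0 ≤ L := by
        by_contra h
        push_neg at h
        have h2 : 0 < (mkPtn (bf p) (hbf_anti p hp) L (hbf_van p)).conj (L + 1) :=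
          ((mkPtn (bf p) (hbf_anti p hp) L (hbf_van p)).lt_conj_iff L 0).mpr (by omega)
        rw [hconj L, hbf_van p L (le_refl L)] at h2
        omega
      rw [Finset.mem_filter]
      constructor
      · rw [hU_mem]
        rw [(mkPtn (bf p) (hbf_anti p hp) L (hbf_van p)).size_eq_conj_sum hp0]
        calc ∑ i ∈ Finset.range L, (mkPtn (bf p) (hbf_anti p hp) L (hbf_van p)).conj (i + 1)
            = ∑ i ∈ Finset.range L, bf p i := Finset.sum_congr rfl (fun i _ => hconj i)
          _ ≤ ∑ i ∈ Finset.range L, lam.conj (i + 1) := Finset.sum_le_sum hbfle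
          _ = n := hsum_c
      · simp only [hVcdef]
        intro i
        rw [hconj i]
        by_cases hi : i ∈ Finset.range L
        · have h3 := Finset.mem_Icc.mp (hpi i hi)
          simp only [hbf]
          rw [dif_pos hi]
          exact h3
        · simp only [hbf]
          rw [dif_neg hi]
          rw [Finset.mem_range] at hi
          constructor
          · rw [hcz (i + 2) (by omega)]
          · exact Nat.zero_le _
    · -- left inverse
      intro nu hmem
      rw [Finset.mem_filter] at hmem
      have hVc : ∀ i : ℕ,
          lam.conj (i + 2) ≤ nu.conj (i + 1) ∧ nu.conj (i + 1) ≤ lam.conj (i + 1) := by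
        have := hmem.2
        simpa [hVcdef] using this
      apply Ptn.eq_of_conj_eq
      intro i
      refine (mkPtn_conj _ _ _ _ i).trans ?_
      simp only [hbf]
      by_cases hi : i ∈ Finset.range L
      · rw [dif_pos hi]
      · rw [dif_neg hi]
        rw [Finset.mem_range] at hi
        have h2 := (hVc i).2
        rw [hcz (i + 1) (by omega)] at h2
        omega
    · -- right inverse
      intro p hp
      funext i hi
      refine (mkPtn_conj _ _ _ _ i).trans ?_
      simp only [hbf]
      rw [dif_pos hi]
    · -- values
      intro nu hmem
      rw [hval nu hmem]
      refine Finset.prod_congr rfl (fun i hi => ?_)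
      simp only [hbf]
      rw [dif_pos hi]
  rw [step4]
  -- factor the sum over tuples as a product of column sums
  have step5 : ∑ p ∈ A, ∏ i ∈ Finset.range L, hcoF q lam i (bf p i)
      = ∏ i ∈ Finset.range L,
          ∑ b ∈ Finset.Icc (lam.conj (i + 2)) (lam.conj (i + 1)), hcoF q lam i b := by
    rw [Finset.prod_sum, hA]
    refine Finset.sum_congr rfl (fun p hp => ?_)
    rw [← Finset.prod_attach (Finset.range L) (fun i => hcoF q lam i (bf p i))]
    refine Finset.prod_congr rfl (fun x _ => ?_)
    simp only [hbf]
    rw [dif_pos x.2]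
  rw [step5]
  -- the factor at the last column vanishes
  apply Finset.prod_eq_zero (Finset.mem_range.mpr (show L - 1 < L by omega))
  have e1 : L - 1 + 1 = L := by omega
  have e2 : L - 1 + 2 = L + 1 := by omega
  have hCpos : 1 ≤ lam.conj L := by
    have h2 := (lam.lt_conj_iff (L - 1) 0).mpr (show L - 1 < lam.parts 0 by omega)
    rw [e1] at h2
    omega
  have hterm : ∀ b : ℕ, hcoF q lam (L - 1) b
      = (-1 : ℚ) ^ (lam.conj L - b) * q ^ (gg (lam.conj L) - gg b) *
        qBinomZ q⁻¹ ((lam.conj L : ℤ)) ((lam.conj L : ℤ) - (b : ℤ)) := by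
    intro b
    rw [hcoF_def, e1, e2, hcz (L + 1) (by omega)]
    simp only [Nat.cast_zero, sub_zero]
  rw [e1, e2, hcz (L + 1) (by omega)]
  rw [Finset.sum_congr rfl (fun b _ => hterm b)]
  exact key_sum hq0 hq1 hqm1 (lam.conj L) hCpos
end
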